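/- Let q be a prime power with q + 1 ≥ t, t ≥ 2. Let ℓ be a 2-dimensional F_q-subspace of F_{q^t} of order m. Then the set ℓ^{−1} = {⟨x^{−1}⟩_{F_q} : x ∈ ℓ \ {0}} is a normal rational curve of order m − 1 contained in an (m−1)-dimensional projective subspace of PG(t−1, q), where m divides t. -/

import Mathlib

open Polynomial

theorem stmt8 (q t m : ℕ) (hq : IsPrimePow q) (ht : 2 ≤ t) (hqt : t ≤ q + 1)
    (F K : Type*) [Field F] [Field K] [Algebra F K] [Fintype F] [Fintype K]
    (hF : Fintype.card F = q) (hK : Fintype.card K = q ^ t)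
    (ℓ : Submodule F K) (hdim : Module.finrank F ℓ = 2)
    (horder : ∀ x y : K, x ∈ ℓ → y ∈ ℓ → LinearIndependent F ![x, y] →
      Module.finrank F (Algebra.adjoin F ({y / x} : Set K)) = m) :
    m ∣ t ∧
    ∃ φ : (Fin m → F) →ₗ[F] K, Function.Injective φ ∧
      (fun v : Fin m → F => Submodule.span F {φ v}) ''
        ({v : Fin m → F | ∃ lam : F, v = fun i : Fin m => lam ^ i.val} ∪
          {fun i : Fin m => if i.val = m - 1 then 1 else 0}) =
      {P : Submodule F K | ∃ x ∈ ℓ, x ≠ 0 ∧ P = Submodule.span F ({x⁻¹} : Set K)} := by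
  classical
  have hq2 : 2 ≤ q := hq.two_le
  haveI : FiniteDimensional F K := Module.Finite.of_finite
  have htK : Module.finrank F K = t := by
    have h := Module.card_eq_pow_finrank (K := F) (V := K)
    rw [hF, hK] at h
    exact (Nat.pow_right_injective hq2 h.symm)
  -- basis of ℓ
  let b := Module.finBasisOfFinrankEq F ℓ hdim
  set x : K := ((b 0 : ℓ) : K) with hxdef
  set y : K := ((b 1 : ℓ) : K) with hydef
  have hxmem : x ∈ ℓ := (b 0).2
  have hymem : y ∈ ℓ := (b 1).2
  have hxy : LinearIndependent F ![x, y] := by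
    have hbli : LinearIndependent F (ℓ.subtype ∘ b) :=
      b.linearIndependent.map' ℓ.subtype ℓ.ker_subtype
    have he : ![x, y] = ℓ.subtype ∘ b := by
      funext i; fin_cases i <;> rfl
    rw [he]; exact hbli
  have hx0 : x ≠ 0 := by simpa using hxy.ne_zero 0
  have hnot : ∀ c : F, y ≠ c • x := by
    intro c hc
    have hs : ∑ i : Fin 2, (![c, -1] : Fin 2 → F) i • (![x, y] : Fin 2 → K) i = 0 := by
      rw [Fin.sum_univ_two]
      simp [hc]
    have := Fintype.linearIndependent_iff.mp hxy ![c, -1] hs 1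
    simpa using this
  set l : K := y / x with hldef
  have hlx : l * x = y := div_mul_cancel₀ y hx0
  have hlint : IsIntegral F l := IsIntegral.of_finite F l
  set f : F[X] := minpoly F l with hfdef
  have hlnot : l ∉ (algebraMap F K).range := by
    rintro ⟨c, hc⟩
    exact hnot c (by rw [Algebra.smul_def, hc, hlx])
  have hm : f.natDegree = m := by
    rw [← horder x y hxmem hymem hxy]
    have : Module.finrank F (Algebra.adjoin F ({l} : Set K)) = f.natDegree :=
      (Algebra.adjoin.powerBasis hlint).finrank
    rw [← this]
  have hdvd : m ∣ t := by
    rw [← htK, ← hm]; exact minpoly.degree_dvd hlint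
  have hm2 : 2 ≤ m := by
    have h0 : 0 < f.natDegree := minpoly.natDegree_pos hlint
    have h1 : f.natDegree ≠ 1 := by
      intro h
      apply hlnot
      rw [← minpoly.degree_eq_one_iff]
      rw [degree_eq_natDegree (minpoly.ne_zero hlint), h]
      rfl
    omega
  have hfm : f.coeff m = 1 := by
    rw [← hm]; exact (minpoly.monic hlint).coeff_natDegree
  have heval : ∀ μ : F, f.eval μ ≠ 0 := by
    intro μ h0
    obtain ⟨g, hg⟩ := dvd_iff_isRoot.mpr h0
    rcases (minpoly.irreducible hlint).isUnit_or_isUnit hg with h | h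
    · exact Polynomial.not_isUnit_X_sub_C μ h
    · have h1 : f.natDegree = 1 := by
        rw [hg, natDegree_mul (X_sub_C_ne_zero μ) h.ne_zero,
          natDegree_X_sub_C, Polynomial.natDegree_eq_zero_of_isUnit h]
      omega
  have hpow : LinearIndependent F fun i : Fin m => l ^ (i : ℕ) := by
    have h := linearIndependent_pow (K := F) l
    rwa [← hfdef, hm] at h
  -- the linear map
  set w : Fin m → K := fun j => x⁻¹ * ∑ k : Fin m, f.coeff (k.val + 1 + j.val) • l ^ k.val
    with hwdef
  set φ : (Fin m → F) →ₗ[F] K :=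
    { toFun := fun v => ∑ j : Fin m, v j • w j
      map_add' := by
        intro u v; simp [add_smul, Finset.sum_add_distrib]
      map_smul' := by
        intro c v; simp [Finset.smul_sum, smul_smul] } with hφdef
  have hφ : ∀ v : Fin m → F,
      x * φ v = ∑ k : Fin m, (∑ j : Fin m, f.coeff (k.val + 1 + j.val) * v j) • l ^ k.val := by
    intro v
    have h1 : x * φ v = ∑ j : Fin m, v j • ∑ k : Fin m, f.coeff (k.val + 1 + j.val) • l ^ k.val := by
      show x * ∑ j : Fin m, v j • w j = _
      rw [Finset.mul_sum]
      refine Finset.sum_congr rfl fun j _ => ?_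
      rw [hwdef, Algebra.mul_smul_comm, mul_inv_cancel_left₀ hx0]
    rw [h1]
    simp only [Finset.smul_sum]
    rw [Finset.sum_comm]
    refine Finset.sum_congr rfl fun k _ => ?_
    rw [Finset.sum_smul]
    refine Finset.sum_congr rfl fun j _ => ?_
    rw [smul_smul, mul_comm]
  have hφinj : Function.Injective φ := by
    rw [← LinearMap.ker_eq_bot, LinearMap.ker_eq_bot']
    intro v hv
    have hS : ∀ k : Fin m, ∑ j : Fin m, f.coeff (k.val + 1 + j.val) * v j = 0 := by
      have h0 : ∑ k : Fin m, (∑ j : Fin m, f.coeff (k.val + 1 + j.val) * v j) • l ^ k.val = 0 := by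
        rw [← hφ v, hv, mul_zero]
      exact Fintype.linearIndependent_iff.mp hpow _ h0
    have key : ∀ n : ℕ, ∀ j : Fin m, j.val < n → v j = 0 := by
      intro n
      induction n with
      | zero => intro j hj; omega
      | succ n ih =>
        intro j hj
        rcases lt_or_ge j.val n with h | h
        · exact ih j h
        have hkm : m - 1 - j.val < m := by omega
        have hs := hS ⟨m - 1 - j.val, hkm⟩
        rw [Finset.sum_eq_single j] at hs
        · have hidx : m - 1 - j.val + 1 + j.val = m := by omega
          rw [hidx, hfm, one_mul] at hs
          exact hs
        · intro c _ hcj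
          have hne : c.val ≠ j.val := fun hh => hcj (Fin.ext hh)
          rcases hne.lt_or_gt with hlt | hgt
          · rw [ih c (by omega), mul_zero]
          · rw [Polynomial.coeff_eq_zero_of_natDegree_lt, zero_mul]
            rw [hm]
            simp only []
            omega
        · intro hj'; exact absurd (Finset.mem_univ j) hj'
    funext j
    exact key m j j.isLt
  have hlsub : ∀ μ : F, l - algebraMap F K μ ≠ 0 := by
    intro μ h
    exact hlnot ⟨μ, (sub_eq_zero.mp h).symm⟩
  have hyx : ∀ μ : F, y - μ • x = x * (l - algebraMap F K μ) := by
    intro μ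
    rw [mul_sub, mul_comm x l, hlx, mul_comm x ((algebraMap F K) μ), ← Algebra.smul_def]
  have hyx0 : ∀ μ : F, y - μ • x ≠ 0 := by
    intro μ
    rw [hyx]
    exact mul_ne_zero hx0 (hlsub μ)
  have hkey : ∀ μ : F, φ (fun i : Fin m => μ ^ i.val) = (-(f.eval μ)) • (y - μ • x)⁻¹ := by
    intro μ
    set μ' := algebraMap F K μ with hμ'def
    set g : F[X] := f /ₘ (X - C μ) with hgdef
    have hgndeg : g.natDegree < m := by
      rw [hgdef, natDegree_divByMonic f (monic_X_sub_C μ), natDegree_X_sub_C, hm]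
      omega
    have hcoeff : ∀ k : Fin m,
        g.coeff k.val = ∑ j : Fin m, f.coeff (k.val + 1 + j.val) * μ ^ j.val := by
      intro k
      rw [hgdef, coeff_divByMonic_X_sub_C, hm]
      have h1 : ∑ i ∈ Finset.Icc (k.val+1) m, μ ^ (i - (k.val+1)) * f.coeff i
          = ∑ j ∈ Finset.range (m - k.val), μ ^ j * f.coeff (k.val + 1 + j) := by
        refine Finset.sum_nbij' (fun i => i - (k.val+1)) (fun j => k.val + 1 + j) ?_ ?_ ?_ ?_ ?_
        · intro a ha
          simp only [Finset.mem_Icc] at ha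
          simp only [Finset.mem_range]
          omega
        · intro a ha
          simp only [Finset.mem_range] at ha
          simp only [Finset.mem_Icc]
          omega
        · intro a ha
          simp only [Finset.mem_Icc] at ha
          show k.val + 1 + (a - (k.val + 1)) = a
          omega
        · intro a ha
          show (k.val + 1 + a) - (k.val + 1) = a
          omega
        · intro a ha
          simp only [Finset.mem_Icc] at ha
          have : k.val + 1 + (a - (k.val + 1)) = a := by omega
          rw [this]
      rw [h1]
      have h2 : ∑ j ∈ Finset.range (m - k.val), μ ^ j * f.coeff (k.val+1+j)
          = ∑ j ∈ Finset.range m, μ ^ j * f.coeff (k.val+1+j) := by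
        refine Finset.sum_subset (Finset.range_subset_range.mpr (by omega)) ?_
        intro j hj hj'
        simp only [Finset.mem_range] at hj hj'
        rw [Polynomial.coeff_eq_zero_of_natDegree_lt, mul_zero]
        rw [hm]
        omega
      rw [h2, ← Fin.sum_univ_eq_sum_range (fun j => μ ^ j * f.coeff (k.val+1+j)) m]
      exact Finset.sum_congr rfl fun j _ => mul_comm _ _
    have hφμ : x * φ (fun i : Fin m => μ ^ i.val) = aeval l g := by
      rw [hφ, aeval_eq_sum_range' hgndeg l,
        ← Fin.sum_univ_eq_sum_range (fun i => g.coeff i • l ^ i) m]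
      exact Finset.sum_congr rfl fun k _ => by rw [hcoeff k]
    have hfg : algebraMap F K (f.eval μ) + (l - μ') * aeval l g = 0 := by
      have h := f.modByMonic_add_div (X - C μ)
      have h2 := congrArg (aeval l) h
      rw [modByMonic_X_sub_C_eq_C_eval] at h2
      simpa [minpoly.aeval F l, ← hfdef, show aeval l f = 0 from minpoly.aeval F l] using h2
    have hal : aeval l g = -(algebraMap F K (f.eval μ)) * (l - μ')⁻¹ := by
      have h3 : aeval l g * (l - μ') = -(algebraMap F K (f.eval μ)) := by
        rw [mul_comm]
        exact eq_neg_of_add_eq_zero_right hfg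
      exact (eq_mul_inv_iff_mul_eq₀ (hlsub μ)).mpr h3
    have h4 : φ (fun i : Fin m => μ ^ i.val) = x⁻¹ * aeval l g := by
      rw [← hφμ, inv_mul_cancel_left₀ hx0]
    rw [h4, hal, hyx μ, mul_inv, Algebra.smul_def, map_neg]
    ring
  have hspan : ∀ (c : F) (u : K), c ≠ 0 →
      Submodule.span F ({c • u} : Set K) = Submodule.span F ({u} : Set K) :=
    fun c u hc => Submodule.span_singleton_smul_eq (IsUnit.mk0 c hc) u
  have hmlt : m - 1 < m := by omega
  have hlast : φ (fun i : Fin m => if i.val = m - 1 then (1:F) else 0) = x⁻¹ := by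
    have h1 : φ (fun i : Fin m => if i.val = m - 1 then (1:F) else 0) = w ⟨m-1, hmlt⟩ := by
      show (∑ j : Fin m, (if j.val = m - 1 then (1:F) else 0) • w j) = _
      rw [Finset.sum_eq_single (⟨m-1, hmlt⟩ : Fin m)]
      · simp
      · intro c _ hc
        have hne : c.val ≠ m - 1 := fun hh => hc (Fin.ext hh)
        simp [hne]
      · intro h; exact absurd (Finset.mem_univ _) h
    rw [h1]
    have h2 : ∑ k : Fin m, f.coeff (k.val + 1 + ((⟨m-1, hmlt⟩ : Fin m)).val) • l ^ k.val
        = 1 := by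
      rw [Finset.sum_eq_single (⟨0, by omega⟩ : Fin m)]
      · have hidx : ((⟨0, by omega⟩ : Fin m)).val + 1 + ((⟨m-1, hmlt⟩ : Fin m)).val = m := by
          show 0 + 1 + (m-1) = m
          omega
        rw [hidx, hfm]
        simp
      · intro c _ hc
        have hcv : c.val ≠ 0 := fun hh => hc (Fin.ext hh)
        rw [Polynomial.coeff_eq_zero_of_natDegree_lt, zero_smul]
        rw [hm]
        show m < c.val + 1 + (m - 1)
        omega
      · intro h; exact absurd (Finset.mem_univ _) h
    show x⁻¹ * _ = x⁻¹
    rw [h2, mul_one]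
  refine ⟨hdvd, φ, hφinj, ?_⟩
  ext P
  simp only [Set.mem_image, Set.mem_union, Set.mem_setOf_eq, Set.mem_singleton_iff]
  constructor
  · rintro ⟨v, hv | hv, rfl⟩
    · obtain ⟨μ, rfl⟩ := hv
      refine ⟨y - μ • x, sub_mem hymem (Submodule.smul_mem ℓ μ hxmem), hyx0 μ, ?_⟩
      rw [hkey μ]
      exact hspan _ _ (neg_ne_zero.mpr (heval μ))
    · rw [hv, hlast]
      exact ⟨x, hxmem, hx0, rfl⟩
  · rintro ⟨z, hzmem, hz0, rfl⟩
    obtain ⟨a, c, hz⟩ : ∃ a c : F, z = a • x + c • y := by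
      have hrep := b.sum_repr ⟨z, hzmem⟩
      refine ⟨b.repr ⟨z, hzmem⟩ 0, b.repr ⟨z, hzmem⟩ 1, ?_⟩
      have hcoe := congrArg (Subtype.val) hrep
      rw [Fin.sum_univ_two] at hcoe
      simpa [mul_comm] using hcoe.symm
    by_cases hc : c = 0
    · have ha : a ≠ 0 := by
        intro h0; apply hz0; rw [hz, hc, h0, zero_smul, zero_smul, add_zero]
      refine ⟨(fun i : Fin m => if i.val = m - 1 then 1 else 0), Or.inr rfl, ?_⟩
      rw [hlast]
      have hzi : z⁻¹ = a⁻¹ • x⁻¹ := by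
        rw [hz, hc, zero_smul, add_zero, Algebra.smul_def, mul_inv, ← map_inv₀, ← Algebra.smul_def]
      rw [hzi, hspan _ _ (inv_ne_zero ha)]
    · set μ : F := -(a / c) with hμ
      have hzc : z = c • (y - μ • x) := by
        rw [smul_sub, smul_smul, hμ]
        have hcm : c * -(a / c) = -a := by field_simp
        rw [hcm, neg_smul, sub_neg_eq_add, hz, add_comm]
      refine ⟨(fun i : Fin m => μ ^ i.val), Or.inl ⟨μ, rfl⟩, ?_⟩
      rw [hkey μ, hspan _ _ (neg_ne_zero.mpr (heval μ))]
      have hzi : z⁻¹ = c⁻¹ • (y - μ • x)⁻¹ := by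
        rw [hzc, Algebra.smul_def, mul_inv, ← map_inv₀, ← Algebra.smul_def]
      rw [hzi, hspan _ _ (inv_ne_zero hc)]
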